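/- arXiv:2604.19188 — 2 statements merged into one kernel-verified Lean document; each statement's English description precedes it below -/
import Mathlib

section
/- Let n ≥ 1 and let U ⊆ ℝⁿ be open. Let P₀, P₁ : U → Mat_n(ℝ) be smooth maps taking skew-symmetric values such that the coordinate Schouten brackets satisfy [P₀,P₀] = 0, [P₁,P₁] = 0 and [P₀,P₁] = 0 identically on U, and such that P₀(z) is invertible for every z ∈ U. Then the matrix-valued map N := P₁·P₀⁻¹ has identically vanishing coordinate Nijenhuis torsion on U; that is, N is a torsionless (Nijenhuis) recursion operator. -/
open Matrix

/-- Partial derivative `∂f/∂z^l` at `z`. -/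
noncomputable def pd {n : ℕ} (l : Fin n) (f : (Fin n → ℝ) → ℝ) (z : Fin n → ℝ) : ℝ :=
  fderiv ℝ f z (Pi.single l 1)

/-- Coordinate Schouten bracket of two (skew-symmetric) matrix-valued maps. -/
noncomputable def schouten {n : ℕ} (P Q : (Fin n → ℝ) → Matrix (Fin n) (Fin n) ℝ)
    (z : Fin n → ℝ) (i j k : Fin n) : ℝ :=
  ∑ l, (P z l i * pd l (fun w => Q w j k) z + Q z l i * pd l (fun w => P w j k) z
      + P z l j * pd l (fun w => Q w k i) z + Q z l j * pd l (fun w => P w k i) z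
      + P z l k * pd l (fun w => Q w i j) z + Q z l k * pd l (fun w => P w i j) z)

/-- Coordinate Nijenhuis torsion of a matrix-valued map. -/
noncomputable def nijenhuis {n : ℕ} (N : (Fin n → ℝ) → Matrix (Fin n) (Fin n) ℝ)
    (z : Fin n → ℝ) (i j k : Fin n) : ℝ :=
  ∑ l, (N z l j * pd l (fun w => N w i k) z - N z l k * pd l (fun w => N w i j) z
      - N z i l * pd j (fun w => N w l k) z + N z i l * pd k (fun w => N w l j) z)

lemma pd_congr {n : ℕ} {l : Fin n} {f g : (Fin n → ℝ) → ℝ} {z : Fin n → ℝ}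
    (h : f =ᶠ[nhds z] g) : pd l f z = pd l g z := by
  unfold pd; rw [h.fderiv_eq]

lemma pd_sum {n : ℕ} {l : Fin n} {z : Fin n → ℝ} {ι : Type*} (s : Finset ι)
    (F : ι → (Fin n → ℝ) → ℝ) (h : ∀ m ∈ s, DifferentiableAt ℝ (F m) z) :
    pd l (fun w => ∑ m ∈ s, F m w) z = ∑ m ∈ s, pd l (F m) z := by
  unfold pd; rw [fderiv_fun_sum h, ContinuousLinearMap.sum_apply]

lemma pd_mul {n : ℕ} {l : Fin n} {z : Fin n → ℝ} {f g : (Fin n → ℝ) → ℝ}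
    (hf : DifferentiableAt ℝ f z) (hg : DifferentiableAt ℝ g z) :
    pd l (fun w => f w * g w) z = pd l f z * g z + f z * pd l g z := by
  unfold pd; rw [fderiv_fun_mul hf hg]
  simp only [ContinuousLinearMap.add_apply, ContinuousLinearMap.smul_apply, smul_eq_mul]
  ring

lemma pd_neg {n : ℕ} {l : Fin n} {z : Fin n → ℝ} {f : (Fin n → ℝ) → ℝ} :
    pd l (fun w => -f w) z = -pd l f z := by
  unfold pd; rw [fderiv_fun_neg]; simp

lemma differentiableAt_det {n : ℕ} {M : (Fin n → ℝ) → Matrix (Fin n) (Fin n) ℝ}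
    {z : Fin n → ℝ} (h : ∀ a c, DifferentiableAt ℝ (fun w => M w a c) z) :
    DifferentiableAt ℝ (fun w => (M w).det) z := by
  have e : (fun w => (M w).det)
      = fun w => ∑ σ : Equiv.Perm (Fin n), ((Equiv.Perm.sign σ : ℤ) : ℝ) * ∏ a, M w (σ a) a := by
    funext w
    rw [Matrix.det_apply]
    refine Finset.sum_congr rfl fun σ _ => ?_
    rw [Units.smul_def, zsmul_eq_mul]
  rw [e]
  refine DifferentiableAt.fun_sum fun σ _ => (differentiableAt_const _).fun_mul ?_
  exact (HasFDerivAt.finset_prod (fun a _ => (h (σ a) a).hasFDerivAt)).differentiableAt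

lemma sum_comm3 {n : ℕ} (f : Fin n → Fin n → Fin n → ℝ) :
    ∑ j, ∑ k, ∑ l, f j k l = ∑ l, ∑ j, ∑ k, f j k l := by
  calc ∑ j, ∑ k, ∑ l, f j k l = ∑ j, ∑ l, ∑ k, f j k l :=
        Finset.sum_congr rfl fun _ _ => Finset.sum_comm
    _ = ∑ l, ∑ j, ∑ k, f j k l := Finset.sum_comm

lemma key {n : ℕ} (Pz Qz Nz : Fin n → Fin n → ℝ)
    (p q nd : Fin n → Fin n → Fin n → ℝ)
    (skewP : ∀ a b, Pz a b = -Pz b a)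
    (skewQ : ∀ a b, Qz a b = -Qz b a)
    (skewp : ∀ l a b, p l a b = -p l b a)
    (skewq : ∀ l a b, q l a b = -q l b a)
    (hE2 : ∀ l a, ∑ m, Nz l m * Qz m a = Pz l a)
    (hE1 : ∀ l a b, ∑ m, nd l a m * Qz m b = p l a b - ∑ m, Nz a m * q l m b)
    (i a b : Fin n)
    (S11 : ∑ l, (Pz l i * p l a b + Pz l a * p l b i + Pz l b * p l i a) = 0)
    (S01 : ∀ c, ∑ l, (Qz l c * p l a b + Pz l c * q l a b + Qz l a * p l b c
        + Pz l a * q l b c + Qz l b * p l c a + Pz l b * q l c a) = 0)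
    (S00 : ∀ c, ∑ l, (Qz l c * q l a b + Qz l a * q l b c + Qz l b * q l c a) = 0) :
    ∑ j, ∑ k, Qz j a * Qz k b *
      (∑ l, (Nz l j * nd l i k - Nz l k * nd l i j - Nz i l * nd j l k + Nz i l * nd k l j)) = 0 := by
  -- collapse lemmas
  have collapse1 : ∀ c d, (∑ m, Nz c m * Qz d m) = -Pz c d := by
    intro c d
    have h1 : (∑ m, Nz c m * Qz d m) = ∑ m, -(Nz c m * Qz m d) := by
      refine Finset.sum_congr rfl fun m _ => ?_
      rw [skewQ d m]; ring
    rw [h1, Finset.sum_neg_distrib, hE2]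
  have collapse2 : ∀ d, (∑ m, (∑ r, Nz i r * Nz r m) * Qz d m) = ∑ r, Nz i r * Pz d r := by
    intro d
    have h1 : (∑ m, (∑ r, Nz i r * Nz r m) * Qz d m)
        = ∑ m, ∑ r, Nz i r * (Nz r m * Qz d m) := by
      refine Finset.sum_congr rfl fun m _ => ?_
      rw [Finset.sum_mul]
      exact Finset.sum_congr rfl fun r _ => by ring
    rw [h1, Finset.sum_comm]
    refine Finset.sum_congr rfl fun r _ => ?_
    rw [← Finset.mul_sum, collapse1 r d, skewP r d]
    ring
  -- Step A : the four contracted pieces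
  have piece1 : ∑ j, ∑ k, ∑ l, Qz j a * Qz k b * (Nz l j * nd l i k)
      = ∑ l, Pz l a * (p l i b - ∑ m, Nz i m * q l m b) := by
    rw [sum_comm3]
    refine Finset.sum_congr rfl fun l _ => ?_
    have e1 : ∑ j, ∑ k, Qz j a * Qz k b * (Nz l j * nd l i k)
        = (∑ j, Nz l j * Qz j a) * (∑ k, nd l i k * Qz k b) := by
      rw [Finset.sum_mul_sum]
      exact Finset.sum_congr rfl fun j _ => Finset.sum_congr rfl fun k _ => by ring
    rw [e1, hE2 l a, hE1 l i b]
  have piece2 : ∑ j, ∑ k, ∑ l, Qz j a * Qz k b * (Nz l k * nd l i j)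
      = ∑ l, Pz l b * (p l i a - ∑ m, Nz i m * q l m a) := by
    rw [sum_comm3]
    refine Finset.sum_congr rfl fun l _ => ?_
    have e1 : ∑ j, ∑ k, Qz j a * Qz k b * (Nz l k * nd l i j)
        = (∑ j, nd l i j * Qz j a) * (∑ k, Nz l k * Qz k b) := by
      rw [Finset.sum_mul_sum]
      exact Finset.sum_congr rfl fun j _ => Finset.sum_congr rfl fun k _ => by ring
    rw [e1, hE1 l i a, hE2 l b]
    ring
  have piece3 : ∑ j, ∑ k, ∑ l, Qz j a * Qz k b * (Nz i l * nd j l k)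
      = ∑ l, Nz i l * ∑ j, Qz j a * (p j l b - ∑ m, Nz l m * q j m b) := by
    rw [sum_comm3]
    refine Finset.sum_congr rfl fun l _ => ?_
    have e1 : ∑ j, ∑ k, Qz j a * Qz k b * (Nz i l * nd j l k)
        = ∑ j, Nz i l * (Qz j a * (∑ k, nd j l k * Qz k b)) := by
      refine Finset.sum_congr rfl fun j _ => ?_
      simp only [Finset.mul_sum]
      exact Finset.sum_congr rfl fun k _ => by ring
    rw [e1, ← Finset.mul_sum]
    congr 1
    exact Finset.sum_congr rfl fun j _ => by rw [hE1 j l b]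
  have piece4 : ∑ j, ∑ k, ∑ l, Qz j a * Qz k b * (Nz i l * nd k l j)
      = ∑ l, Nz i l * ∑ k, Qz k b * (p k l a - ∑ m, Nz l m * q k m a) := by
    rw [sum_comm3]
    refine Finset.sum_congr rfl fun l _ => ?_
    rw [Finset.sum_comm]
    have e1 : ∑ k, ∑ j, Qz j a * Qz k b * (Nz i l * nd k l j)
        = ∑ k, Nz i l * (Qz k b * (∑ j, nd k l j * Qz j a)) := by
      refine Finset.sum_congr rfl fun k _ => ?_
      simp only [Finset.mul_sum]
      exact Finset.sum_congr rfl fun j _ => by ring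
    rw [e1, ← Finset.mul_sum]
    congr 1
    exact Finset.sum_congr rfl fun k _ => by rw [hE1 k l a]
  -- assemble step A
  have stepA : ∑ j, ∑ k, Qz j a * Qz k b *
        (∑ l, (Nz l j * nd l i k - Nz l k * nd l i j - Nz i l * nd j l k + Nz i l * nd k l j))
      = (∑ l, Pz l a * (p l i b - ∑ m, Nz i m * q l m b))
        - (∑ l, Pz l b * (p l i a - ∑ m, Nz i m * q l m a))
        - (∑ l, Nz i l * ∑ j, Qz j a * (p j l b - ∑ m, Nz l m * q j m b))
        + (∑ l, Nz i l * ∑ k, Qz k b * (p k l a - ∑ m, Nz l m * q k m a)) := by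
    calc ∑ j, ∑ k, Qz j a * Qz k b *
        (∑ l, (Nz l j * nd l i k - Nz l k * nd l i j - Nz i l * nd j l k + Nz i l * nd k l j))
        = ∑ j, ∑ k, ∑ l, (Qz j a * Qz k b * (Nz l j * nd l i k)
            - Qz j a * Qz k b * (Nz l k * nd l i j)
            - Qz j a * Qz k b * (Nz i l * nd j l k)
            + Qz j a * Qz k b * (Nz i l * nd k l j)) := by
          refine Finset.sum_congr rfl fun j _ => Finset.sum_congr rfl fun k _ => ?_
          rw [Finset.mul_sum]
          exact Finset.sum_congr rfl fun l _ => by ring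
      _ = (∑ j, ∑ k, ∑ l, Qz j a * Qz k b * (Nz l j * nd l i k))
            - (∑ j, ∑ k, ∑ l, Qz j a * Qz k b * (Nz l k * nd l i j))
            - (∑ j, ∑ k, ∑ l, Qz j a * Qz k b * (Nz i l * nd j l k))
            + (∑ j, ∑ k, ∑ l, Qz j a * Qz k b * (Nz i l * nd k l j)) := by
          simp only [Finset.sum_sub_distrib, Finset.sum_add_distrib]
      _ = _ := by rw [piece1, piece2, piece3, piece4]
  rw [stepA]
  -- canonical expansions
  have expandA : (∑ l, Pz l a * (p l i b - ∑ m, Nz i m * q l m b))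
      = (∑ l, Pz l a * p l i b) - ∑ l, ∑ m, Nz i m * (Pz l a * q l m b) := by
    calc ∑ l, Pz l a * (p l i b - ∑ m, Nz i m * q l m b)
        = ∑ l, (Pz l a * p l i b - ∑ m, Nz i m * (Pz l a * q l m b)) := by
          refine Finset.sum_congr rfl fun l _ => ?_
          rw [mul_sub, Finset.mul_sum]
          congr 1
          exact Finset.sum_congr rfl fun m _ => by ring
      _ = _ := Finset.sum_sub_distrib _ _
  have expandB : (∑ l, Pz l b * (p l i a - ∑ m, Nz i m * q l m a))
      = (∑ l, Pz l b * p l i a) - ∑ l, ∑ m, Nz i m * (Pz l b * q l m a) := by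
    calc ∑ l, Pz l b * (p l i a - ∑ m, Nz i m * q l m a)
        = ∑ l, (Pz l b * p l i a - ∑ m, Nz i m * (Pz l b * q l m a)) := by
          refine Finset.sum_congr rfl fun l _ => ?_
          rw [mul_sub, Finset.mul_sum]
          congr 1
          exact Finset.sum_congr rfl fun m _ => by ring
      _ = _ := Finset.sum_sub_distrib _ _
  have expandC : (∑ l, Nz i l * ∑ j, Qz j a * (p j l b - ∑ m, Nz l m * q j m b))
      = (∑ l, ∑ m, Nz i m * (Qz l a * p l m b))
        - ∑ l, ∑ m, ∑ r, Nz i m * Nz m r * (Qz l a * q l r b) := by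
    calc ∑ l, Nz i l * ∑ j, Qz j a * (p j l b - ∑ m, Nz l m * q j m b)
        = ∑ l, ∑ j, (Nz i l * (Qz j a * p j l b)
            - ∑ m, Nz i l * Nz l m * (Qz j a * q j m b)) := by
          refine Finset.sum_congr rfl fun l _ => ?_
          rw [Finset.mul_sum]
          refine Finset.sum_congr rfl fun j _ => ?_
          have e2 : ∑ m, Nz i l * Nz l m * (Qz j a * q j m b)
              = Nz i l * (Qz j a * ∑ m, Nz l m * q j m b) := by
            rw [Finset.mul_sum, Finset.mul_sum]
            exact Finset.sum_congr rfl fun m _ => by ring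
          rw [e2]; ring
      _ = (∑ l, ∑ j, Nz i l * (Qz j a * p j l b))
            - ∑ l, ∑ j, ∑ m, Nz i l * Nz l m * (Qz j a * q j m b) := by
          simp only [Finset.sum_sub_distrib]
      _ = _ := by
          congr 1
          · exact Finset.sum_comm
          · exact Finset.sum_comm
  have expandD : (∑ l, Nz i l * ∑ k, Qz k b * (p k l a - ∑ m, Nz l m * q k m a))
      = (∑ l, ∑ m, Nz i m * (Qz l b * p l m a))
        - ∑ l, ∑ m, ∑ r, Nz i m * Nz m r * (Qz l b * q l r a) := by
    calc ∑ l, Nz i l * ∑ k, Qz k b * (p k l a - ∑ m, Nz l m * q k m a)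
        = ∑ l, ∑ k, (Nz i l * (Qz k b * p k l a)
            - ∑ m, Nz i l * Nz l m * (Qz k b * q k m a)) := by
          refine Finset.sum_congr rfl fun l _ => ?_
          rw [Finset.mul_sum]
          refine Finset.sum_congr rfl fun k _ => ?_
          have e2 : ∑ m, Nz i l * Nz l m * (Qz k b * q k m a)
              = Nz i l * (Qz k b * ∑ m, Nz l m * q k m a) := by
            rw [Finset.mul_sum, Finset.mul_sum]
            exact Finset.sum_congr rfl fun m _ => by ring
          rw [e2]; ring
      _ = (∑ l, ∑ k, Nz i l * (Qz k b * p k l a))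
            - ∑ l, ∑ k, ∑ m, Nz i l * Nz l m * (Qz k b * q k m a) := by
          simp only [Finset.sum_sub_distrib]
      _ = _ := by
          congr 1
          · exact Finset.sum_comm
          · exact Finset.sum_comm
  rw [expandA, expandB, expandC, expandD]
  -- the three vanishing Schouten combinations, in canonical form
  have zero1 : (∑ l, Pz l i * p l a b) + (∑ l, Pz l a * p l b i)
      + (∑ l, Pz l b * p l i a) = 0 := by
    rw [← Finset.sum_add_distrib, ← Finset.sum_add_distrib]
    exact S11
  have zero2 : (∑ l, Pz l i * p l a b) + (∑ l, ∑ m, Nz i m * (Pz l m * q l a b))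
      + (∑ l, ∑ m, Nz i m * (Qz l a * p l b m)) + (∑ l, ∑ m, Nz i m * (Pz l a * q l b m))
      + (∑ l, ∑ m, Nz i m * (Qz l b * p l m a)) + (∑ l, ∑ m, Nz i m * (Pz l b * q l m a))
      = 0 := by
    have h0 : ∑ m, Nz i m * (∑ l, (Qz l m * p l a b + Pz l m * q l a b + Qz l a * p l b m
        + Pz l a * q l b m + Qz l b * p l m a + Pz l b * q l m a)) = 0 :=
      Finset.sum_eq_zero fun m _ => by rw [S01 m, mul_zero]
    have h1 : ∑ m, Nz i m * (∑ l, (Qz l m * p l a b + Pz l m * q l a b + Qz l a * p l b m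
          + Pz l a * q l b m + Qz l b * p l m a + Pz l b * q l m a))
        = (∑ l, ∑ m, Nz i m * (Qz l m * p l a b)) + (∑ l, ∑ m, Nz i m * (Pz l m * q l a b))
          + (∑ l, ∑ m, Nz i m * (Qz l a * p l b m)) + (∑ l, ∑ m, Nz i m * (Pz l a * q l b m))
          + (∑ l, ∑ m, Nz i m * (Qz l b * p l m a))
          + (∑ l, ∑ m, Nz i m * (Pz l b * q l m a)) := by
      calc ∑ m, Nz i m * (∑ l, (Qz l m * p l a b + Pz l m * q l a b + Qz l a * p l b m
          + Pz l a * q l b m + Qz l b * p l m a + Pz l b * q l m a))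
          = ∑ m, ∑ l, (Nz i m * (Qz l m * p l a b) + Nz i m * (Pz l m * q l a b)
            + Nz i m * (Qz l a * p l b m) + Nz i m * (Pz l a * q l b m)
            + Nz i m * (Qz l b * p l m a) + Nz i m * (Pz l b * q l m a)) := by
            refine Finset.sum_congr rfl fun m _ => ?_
            rw [Finset.mul_sum]
            exact Finset.sum_congr rfl fun l _ => by ring
        _ = ∑ l, ∑ m, (Nz i m * (Qz l m * p l a b) + Nz i m * (Pz l m * q l a b)
            + Nz i m * (Qz l a * p l b m) + Nz i m * (Pz l a * q l b m)
            + Nz i m * (Qz l b * p l m a) + Nz i m * (Pz l b * q l m a)) := Finset.sum_comm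
        _ = _ := by simp only [Finset.sum_add_distrib]
    have h2 : (∑ l, ∑ m, Nz i m * (Qz l m * p l a b)) = ∑ l, Pz l i * p l a b := by
      refine Finset.sum_congr rfl fun l _ => ?_
      have e1 : ∑ m, Nz i m * (Qz l m * p l a b) = (∑ m, Nz i m * Qz l m) * p l a b := by
        rw [Finset.sum_mul]
        exact Finset.sum_congr rfl fun m _ => by ring
      rw [e1, collapse1 i l, skewP l i]
    rw [← h2]
    rw [h1] at h0
    linarith [h0]
  have zero3 : (∑ l, ∑ m, Nz i m * (Pz l m * q l a b))
      + (∑ l, ∑ m, ∑ r, Nz i m * Nz m r * (Qz l a * q l b r))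
      + (∑ l, ∑ m, ∑ r, Nz i m * Nz m r * (Qz l b * q l r a)) = 0 := by
    have h0 : ∑ m, (∑ r, Nz i r * Nz r m) * (∑ l, (Qz l m * q l a b + Qz l a * q l b m
        + Qz l b * q l m a)) = 0 :=
      Finset.sum_eq_zero fun m _ => by rw [S00 m, mul_zero]
    have h1 : ∑ m, (∑ r, Nz i r * Nz r m) * (∑ l, (Qz l m * q l a b + Qz l a * q l b m
          + Qz l b * q l m a))
        = (∑ l, ∑ m, (∑ r, Nz i r * Nz r m) * (Qz l m * q l a b))
          + (∑ l, ∑ m, (∑ r, Nz i r * Nz r m) * (Qz l a * q l b m))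
          + (∑ l, ∑ m, (∑ r, Nz i r * Nz r m) * (Qz l b * q l m a)) := by
      calc ∑ m, (∑ r, Nz i r * Nz r m) * (∑ l, (Qz l m * q l a b + Qz l a * q l b m
          + Qz l b * q l m a))
          = ∑ m, ∑ l, ((∑ r, Nz i r * Nz r m) * (Qz l m * q l a b)
            + (∑ r, Nz i r * Nz r m) * (Qz l a * q l b m)
            + (∑ r, Nz i r * Nz r m) * (Qz l b * q l m a)) := by
            refine Finset.sum_congr rfl fun m _ => ?_
            rw [Finset.mul_sum]
            exact Finset.sum_congr rfl fun l _ => by ring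
        _ = ∑ l, ∑ m, ((∑ r, Nz i r * Nz r m) * (Qz l m * q l a b)
            + (∑ r, Nz i r * Nz r m) * (Qz l a * q l b m)
            + (∑ r, Nz i r * Nz r m) * (Qz l b * q l m a)) := Finset.sum_comm
        _ = _ := by simp only [Finset.sum_add_distrib]
    have h2 : (∑ l, ∑ m, (∑ r, Nz i r * Nz r m) * (Qz l m * q l a b))
        = ∑ l, ∑ m, Nz i m * (Pz l m * q l a b) := by
      refine Finset.sum_congr rfl fun l _ => ?_
      have e1 : ∑ m, (∑ r, Nz i r * Nz r m) * (Qz l m * q l a b)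
          = (∑ m, (∑ r, Nz i r * Nz r m) * Qz l m) * q l a b := by
        rw [Finset.sum_mul]
        exact Finset.sum_congr rfl fun m _ => by ring
      rw [e1, collapse2 l, Finset.sum_mul]
      exact Finset.sum_congr rfl fun m _ => by ring
    have h3 : (∑ l, ∑ m, (∑ r, Nz i r * Nz r m) * (Qz l a * q l b m))
        = ∑ l, ∑ m, ∑ r, Nz i m * Nz m r * (Qz l a * q l b r) := by
      refine Finset.sum_congr rfl fun l _ => ?_
      calc ∑ m, (∑ r, Nz i r * Nz r m) * (Qz l a * q l b m)
          = ∑ m, ∑ r, Nz i r * Nz r m * (Qz l a * q l b m) := by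
            refine Finset.sum_congr rfl fun m _ => ?_
            rw [Finset.sum_mul]
        _ = ∑ m, ∑ r, Nz i m * Nz m r * (Qz l a * q l b r) := Finset.sum_comm
    have h4 : (∑ l, ∑ m, (∑ r, Nz i r * Nz r m) * (Qz l b * q l m a))
        = ∑ l, ∑ m, ∑ r, Nz i m * Nz m r * (Qz l b * q l r a) := by
      refine Finset.sum_congr rfl fun l _ => ?_
      calc ∑ m, (∑ r, Nz i r * Nz r m) * (Qz l b * q l m a)
          = ∑ m, ∑ r, Nz i r * Nz r m * (Qz l b * q l m a) := by
            refine Finset.sum_congr rfl fun m _ => ?_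
            rw [Finset.sum_mul]
        _ = ∑ m, ∑ r, Nz i m * Nz m r * (Qz l b * q l r a) := Finset.sum_comm
    rw [h1, h2, h3, h4] at h0
    linarith [h0]
  -- termwise skew-symmetry identities
  have sk1 : (∑ l, Pz l a * p l i b) = -(∑ l, Pz l a * p l b i) := by
    rw [← Finset.sum_neg_distrib]
    exact Finset.sum_congr rfl fun l _ => by rw [skewp l i b]; ring
  have sk2 : (∑ l, ∑ m, Nz i m * (Pz l a * q l m b))
      = -(∑ l, ∑ m, Nz i m * (Pz l a * q l b m)) := by
    rw [← Finset.sum_neg_distrib]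
    refine Finset.sum_congr rfl fun l _ => ?_
    rw [← Finset.sum_neg_distrib]
    exact Finset.sum_congr rfl fun m _ => by rw [skewq l m b]; ring
  have sk3 : (∑ l, ∑ m, Nz i m * (Qz l a * p l m b))
      = -(∑ l, ∑ m, Nz i m * (Qz l a * p l b m)) := by
    rw [← Finset.sum_neg_distrib]
    refine Finset.sum_congr rfl fun l _ => ?_
    rw [← Finset.sum_neg_distrib]
    exact Finset.sum_congr rfl fun m _ => by rw [skewp l m b]; ring
  have sk4 : (∑ l, ∑ m, ∑ r, Nz i m * Nz m r * (Qz l a * q l r b))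
      = -(∑ l, ∑ m, ∑ r, Nz i m * Nz m r * (Qz l a * q l b r)) := by
    rw [← Finset.sum_neg_distrib]
    refine Finset.sum_congr rfl fun l _ => ?_
    rw [← Finset.sum_neg_distrib]
    refine Finset.sum_congr rfl fun m _ => ?_
    rw [← Finset.sum_neg_distrib]
    exact Finset.sum_congr rfl fun r _ => by rw [skewq l r b]; ring
  linarith [zero1, zero2, zero3, sk1, sk2, sk3, sk4]


/-- if `P₀, P₁` are smooth skew-symmetric compatible Poisson tensors on an open
set `U ⊆ ℝⁿ` with `P₀` invertible everywhere, then `N = P₁ · P₀⁻¹` has vanishing coordinate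
Nijenhuis torsion on `U`. -/
theorem recursion_operator_torsionless {n : ℕ} (hn : 1 ≤ n)
    (U : Set (Fin n → ℝ)) (hU : IsOpen U)
    (P₀ P₁ : (Fin n → ℝ) → Matrix (Fin n) (Fin n) ℝ)
    (hP₀smooth : ∀ i j, ContDiffOn ℝ (⊤ : ℕ∞) (fun z => P₀ z i j) U)
    (hP₁smooth : ∀ i j, ContDiffOn ℝ (⊤ : ℕ∞) (fun z => P₁ z i j) U)
    (hP₀skew : ∀ z ∈ U, (P₀ z)ᵀ = -P₀ z)
    (hP₁skew : ∀ z ∈ U, (P₁ z)ᵀ = -P₁ z)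
    (h00 : ∀ z ∈ U, ∀ i j k, schouten P₀ P₀ z i j k = 0)
    (h11 : ∀ z ∈ U, ∀ i j k, schouten P₁ P₁ z i j k = 0)
    (h01 : ∀ z ∈ U, ∀ i j k, schouten P₀ P₁ z i j k = 0)
    (hinv : ∀ z ∈ U, IsUnit (P₀ z)) :
    ∀ z ∈ U, ∀ i j k, nijenhuis (fun w => P₁ w * (P₀ w)⁻¹) z i j k = 0 := by
  intro z hz i j k
  have hUz : U ∈ nhds z := hU.mem_nhds hz
  have hdet : ∀ w ∈ U, IsUnit (P₀ w).det := fun w hw =>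
    (Matrix.isUnit_iff_isUnit_det _).mp (hinv w hw)
  have dQ : ∀ a c, DifferentiableAt ℝ (fun w => P₀ w a c) z := fun a c =>
    ((hP₀smooth a c).contDiffAt hUz).differentiableAt (by norm_num)
  have dP : ∀ a c, DifferentiableAt ℝ (fun w => P₁ w a c) z := fun a c =>
    ((hP₁smooth a c).contDiffAt hUz).differentiableAt (by norm_num)
  have dR : ∀ a c, DifferentiableAt ℝ (fun w => (P₀ w)⁻¹ a c) z := by
    intro a c
    have hfun : (fun w => (P₀ w)⁻¹ a c)
        = fun w => ((P₀ w).det)⁻¹ * (P₀ w).adjugate a c := by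
      funext w
      rw [Matrix.inv_def, Matrix.smul_apply, Ring.inverse_eq_inv, smul_eq_mul]
    have dadj : DifferentiableAt ℝ (fun w => (P₀ w).adjugate a c) z := by
      have hadj : (fun w => (P₀ w).adjugate a c)
          = fun w => ((P₀ w).updateRow c (Pi.single a 1)).det := by
        funext w; rw [Matrix.adjugate_apply]
      rw [hadj]
      refine differentiableAt_det fun r s => ?_
      by_cases hrc : r = c
      · have e : (fun w => (P₀ w).updateRow c (Pi.single a 1) r s)
            = fun _ => Pi.single (M := fun _ : Fin n => ℝ) a 1 s := by
          funext w; rw [Matrix.updateRow_apply]; simp [hrc]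
        rw [e]; exact differentiableAt_const _
      · have e : (fun w => (P₀ w).updateRow c (Pi.single a 1) r s) = fun w => P₀ w r s := by
          funext w; rw [Matrix.updateRow_apply]; simp [hrc]
        rw [e]; exact dQ r s
    rw [hfun]
    exact ((differentiableAt_det dQ).inv (hdet z hz).ne_zero).mul dadj
  have dN : ∀ a c, DifferentiableAt ℝ (fun w => (P₁ w * (P₀ w)⁻¹) a c) z := by
    intro a c
    have e : (fun w => (P₁ w * (P₀ w)⁻¹) a c) = fun w => ∑ m, P₁ w a m * (P₀ w)⁻¹ m c := by
      funext w; rw [Matrix.mul_apply]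
    rw [e]
    exact DifferentiableAt.fun_sum fun m _ => (dP a m).fun_mul (dR m c)
  have hNQ : ∀ w ∈ U, (P₁ w * (P₀ w)⁻¹) * P₀ w = P₁ w := fun w hw =>
    Matrix.nonsing_inv_mul_cancel_right _ _ (hdet w hw)
  have hE2 : ∀ l c, ∑ m, (P₁ z * (P₀ z)⁻¹) l m * P₀ z m c = P₁ z l c := by
    intro l c
    rw [← Matrix.mul_apply, hNQ z hz]
  have hE1 : ∀ l a c, ∑ m, pd l (fun w => (P₁ w * (P₀ w)⁻¹) a m) z * P₀ z m c
      = pd l (fun w => P₁ w a c) z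
        - ∑ m, (P₁ z * (P₀ z)⁻¹) a m * pd l (fun w => P₀ w m c) z := by
    intro l a c
    have hcong : pd l (fun w => ∑ m, (P₁ w * (P₀ w)⁻¹) a m * P₀ w m c) z
        = pd l (fun w => P₁ w a c) z := by
      refine pd_congr ?_
      filter_upwards [hUz] with w hw
      rw [← Matrix.mul_apply, hNQ w hw]
    have hsum : pd l (fun w => ∑ m, (P₁ w * (P₀ w)⁻¹) a m * P₀ w m c) z
        = (∑ m, pd l (fun w => (P₁ w * (P₀ w)⁻¹) a m) z * P₀ z m c)
          + ∑ m, (P₁ z * (P₀ z)⁻¹) a m * pd l (fun w => P₀ w m c) z := by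
      rw [pd_sum Finset.univ _ (fun m _ => (dN a m).fun_mul (dQ m c)), ← Finset.sum_add_distrib]
      exact Finset.sum_congr rfl fun m _ => pd_mul (dN a m) (dQ m c)
    rw [hcong] at hsum
    linarith [hsum]
  have skewPv : ∀ a c, P₁ z a c = -P₁ z c a := by
    intro a c
    have h := congrFun (congrFun (hP₁skew z hz) c) a
    simpa [Matrix.transpose_apply, Matrix.neg_apply] using h
  have skewQv : ∀ a c, P₀ z a c = -P₀ z c a := by
    intro a c
    have h := congrFun (congrFun (hP₀skew z hz) c) a
    simpa [Matrix.transpose_apply, Matrix.neg_apply] using h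
  have skewq : ∀ (l a c : Fin n),
      pd l (fun w => P₀ w a c) z = -pd l (fun w => P₀ w c a) z := by
    intro l a c
    have h1 : pd l (fun w => P₀ w a c) z = pd l (fun w => -(P₀ w c a)) z := by
      refine pd_congr ?_
      filter_upwards [hUz] with w hw
      have h := congrFun (congrFun (hP₀skew w hw) c) a
      simpa [Matrix.transpose_apply, Matrix.neg_apply] using h
    rw [h1, pd_neg]
  have skewp : ∀ (l a c : Fin n),
      pd l (fun w => P₁ w a c) z = -pd l (fun w => P₁ w c a) z := by
    intro l a c
    have h1 : pd l (fun w => P₁ w a c) z = pd l (fun w => -(P₁ w c a)) z := by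
      refine pd_congr ?_
      filter_upwards [hUz] with w hw
      have h := congrFun (congrFun (hP₁skew w hw) c) a
      simpa [Matrix.transpose_apply, Matrix.neg_apply] using h
    rw [h1, pd_neg]
  have S11 : ∀ c a b, ∑ l, (P₁ z l c * pd l (fun w => P₁ w a b) z
      + P₁ z l a * pd l (fun w => P₁ w b c) z
      + P₁ z l b * pd l (fun w => P₁ w c a) z) = 0 := by
    intro c a b
    have h := h11 z hz c a b
    unfold schouten at h
    have e : ∑ l, (P₁ z l c * pd l (fun w => P₁ w a b) z + P₁ z l c * pd l (fun w => P₁ w a b) z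
        + P₁ z l a * pd l (fun w => P₁ w b c) z + P₁ z l a * pd l (fun w => P₁ w b c) z
        + P₁ z l b * pd l (fun w => P₁ w c a) z + P₁ z l b * pd l (fun w => P₁ w c a) z)
        = 2 * ∑ l, (P₁ z l c * pd l (fun w => P₁ w a b) z
          + P₁ z l a * pd l (fun w => P₁ w b c) z
          + P₁ z l b * pd l (fun w => P₁ w c a) z) := by
      rw [Finset.mul_sum]
      exact Finset.sum_congr rfl fun l _ => by ring
    rw [e] at h
    linarith [h]
  have S00 : ∀ c a b, ∑ l, (P₀ z l c * pd l (fun w => P₀ w a b) z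
      + P₀ z l a * pd l (fun w => P₀ w b c) z
      + P₀ z l b * pd l (fun w => P₀ w c a) z) = 0 := by
    intro c a b
    have h := h00 z hz c a b
    unfold schouten at h
    have e : ∑ l, (P₀ z l c * pd l (fun w => P₀ w a b) z + P₀ z l c * pd l (fun w => P₀ w a b) z
        + P₀ z l a * pd l (fun w => P₀ w b c) z + P₀ z l a * pd l (fun w => P₀ w b c) z
        + P₀ z l b * pd l (fun w => P₀ w c a) z + P₀ z l b * pd l (fun w => P₀ w c a) z)
        = 2 * ∑ l, (P₀ z l c * pd l (fun w => P₀ w a b) z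
          + P₀ z l a * pd l (fun w => P₀ w b c) z
          + P₀ z l b * pd l (fun w => P₀ w c a) z) := by
      rw [Finset.mul_sum]
      exact Finset.sum_congr rfl fun l _ => by ring
    rw [e] at h
    linarith [h]
  have S01 : ∀ c a b, ∑ l, (P₀ z l c * pd l (fun w => P₁ w a b) z
      + P₁ z l c * pd l (fun w => P₀ w a b) z
      + P₀ z l a * pd l (fun w => P₁ w b c) z
      + P₁ z l a * pd l (fun w => P₀ w b c) z
      + P₀ z l b * pd l (fun w => P₁ w c a) z
      + P₁ z l b * pd l (fun w => P₀ w c a) z) = 0 := by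
    intro c a b
    have h := h01 z hz c a b
    unfold schouten at h
    exact h
  -- apply the algebraic key lemma
  have hkey : ∀ a b, ∑ j', ∑ k', P₀ z j' a * P₀ z k' b *
      nijenhuis (fun w => P₁ w * (P₀ w)⁻¹) z i j' k' = 0 := by
    intro a b
    have h := key (P₁ z) (P₀ z) (P₁ z * (P₀ z)⁻¹)
      (fun l a c => pd l (fun w => P₁ w a c) z)
      (fun l a c => pd l (fun w => P₀ w a c) z)
      (fun l a c => pd l (fun w => (P₁ w * (P₀ w)⁻¹) a c) z)
      skewPv skewQv skewp skewq hE2 hE1 i a b (S11 i a b) (fun c => S01 c a b)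
      (fun c => S00 c a b)
    simpa only [nijenhuis] using h
  have hdetT : IsUnit ((P₀ z)ᵀ).det := by
    rw [Matrix.det_transpose]; exact hdet z hz
  set T : Matrix (Fin n) (Fin n) ℝ :=
    Matrix.of fun j' k' => nijenhuis (fun w => P₁ w * (P₀ w)⁻¹) z i j' k' with hT
  have hTQ : (P₀ z)ᵀ * T * P₀ z = 0 := by
    ext a b
    have e1 : ((P₀ z)ᵀ * T * P₀ z) a b = ∑ k', ∑ j', P₀ z j' a * T j' k' * P₀ z k' b := by
      rw [Matrix.mul_apply]
      refine Finset.sum_congr rfl fun k' _ => ?_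
      rw [Matrix.mul_apply, Finset.sum_mul]
      exact Finset.sum_congr rfl fun j' _ => by rw [Matrix.transpose_apply]
    have e2 : ∑ k', ∑ j', P₀ z j' a * T j' k' * P₀ z k' b
        = ∑ j', ∑ k', P₀ z j' a * P₀ z k' b * T j' k' := by
      rw [Finset.sum_comm]
      exact Finset.sum_congr rfl fun j' _ => Finset.sum_congr rfl fun k' _ => by ring
    rw [e1, e2, Matrix.zero_apply]
    exact hkey a b
  have h1 : ((P₀ z)ᵀ)⁻¹ * ((P₀ z)ᵀ * T * P₀ z) * (P₀ z)⁻¹ = T := by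
    rw [Matrix.mul_assoc ((P₀ z)ᵀ) T (P₀ z),
      Matrix.nonsing_inv_mul_cancel_left _ _ hdetT,
      Matrix.mul_nonsing_inv_cancel_right _ _ (hdet z hz)]
  have hT0 : T = 0 := by
    rw [← h1, hTQ, Matrix.mul_zero, Matrix.zero_mul]
  have := congrFun (congrFun hT0 j) k
  simpa [hT] using this
end

section
/- The functions H_KK and K_KK are in involution with respect to the canonical Poisson bracket: {H_KK, K_KK}₀ = 0 at every point of ℝ⁴ with y ≠ 0. -/
/-- Canonical Poisson bracket on ℝ⁴ with coordinates `(p_x, p_y, x, y)`: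
`{f,g}₀ = f_x g_{p_x} − f_{p_x} g_x + f_y g_{p_y} − f_{p_y} g_y`. -/
noncomputable def pbracket (f g : ℝ → ℝ → ℝ → ℝ → ℝ) (px py x y : ℝ) : ℝ :=
    (deriv (fun t => f px py t y) x) * (deriv (fun t => g t py x y) px)
  - (deriv (fun t => f t py x y) px) * (deriv (fun t => g px py t y) x)
  + (deriv (fun t => f px py x t) y) * (deriv (fun t => g px t x y) py)
  - (deriv (fun t => f px t x y) py) * (deriv (fun t => g px py x t) y)

/-- The Kaup–Kupershmidt Hamiltonian. -/
noncomputable def HKK (a ω μ : ℝ) (px py x y : ℝ) : ℝ :=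
  (1/2) * (px^2 + py^2) + 8*ω*x^2 + (ω/2)*y^2 + a*x*y^2 + (16*a/3)*x^3 + μ/(2*y^2)

/-- The Kaup–Kupershmidt quartic integral. -/
noncomputable def KKK (a ω μ : ℝ) (px py x y : ℝ) : ℝ :=
  9*(ω*y^2 + py^2 + μ/y^2)^2 + 12*a*py*y^2*(3*x*py - y*px)
    - 2*a^2*y^4*(6*x^2 + y^2) + 12*a*x*(μ - ω*y^4) - 18*ω*μ

/-- `{H_KK, K_KK}₀ = 0` at every point with `y ≠ 0`. -/
theorem HKK_KKK_involution (a ω μ : ℝ) (px py x y : ℝ) (hy : y ≠ 0) :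
    pbracket (HKK a ω μ) (KKK a ω μ) px py x y = 0 := by
  have hyp : y ^ 2 ≠ 0 := pow_ne_zero 2 hy
  have hyp2 : (2:ℝ) * y ^ 2 ≠ 0 := mul_ne_zero two_ne_zero hyp
  -- ∂H/∂px
  have h1 : HasDerivAt (fun t : ℝ => HKK a ω μ t py x y) px px := by
    simp only [HKK]
    have h := ((((((hasDerivAt_pow 2 px).add_const (py^2)).const_mul
        ((1:ℝ)/2)).add_const (8*ω*x^2)).add_const ((ω/2)*y^2)).add_const
        (a*x*y^2)).add_const ((16*a/3)*x^3) |>.add_const (μ/(2*y^2))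
    refine h.congr_deriv ?_
    push_cast
    ring
  -- ∂H/∂x
  have h2 : HasDerivAt (fun t : ℝ => HKK a ω μ px py t y)
      (16*ω*x + a*y^2 + 16*a*x^2) x := by
    simp only [HKK]
    have h := (((((hasDerivAt_const x ((1:ℝ)/2*(px^2+py^2))).add
        ((hasDerivAt_pow 2 x).const_mul (8*ω))).add_const ((ω/2)*y^2)).add
        (((hasDerivAt_id' x).const_mul a).mul_const (y^2))).add
        ((hasDerivAt_pow 3 x).const_mul (16*a/3))).add_const (μ/(2*y^2))
    refine h.congr_deriv ?_
    push_cast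
    ring
  -- ∂H/∂py
  have h3 : HasDerivAt (fun t : ℝ => HKK a ω μ px t x y) py py := by
    simp only [HKK]
    have h := (((((((hasDerivAt_pow 2 py).const_add (px^2)).const_mul
        ((1:ℝ)/2)).add_const (8*ω*x^2)).add_const ((ω/2)*y^2)).add_const
        (a*x*y^2)).add_const ((16*a/3)*x^3)).add_const (μ/(2*y^2))
    refine h.congr_deriv ?_
    push_cast
    ring
  -- ∂H/∂y
  have h4 : HasDerivAt (fun t : ℝ => HKK a ω μ px py x t)
      (ω*y + 2*a*x*y - μ/y^3) y := by
    simp only [HKK]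
    have h := (((((hasDerivAt_const y ((1:ℝ)/2*(px^2+py^2))).add_const
        (8*ω*x^2)).add ((hasDerivAt_pow 2 y).const_mul (ω/2))).add
        ((hasDerivAt_pow 2 y).const_mul (a*x))).add_const ((16*a/3)*x^3)).add
        ((hasDerivAt_const y μ).div ((hasDerivAt_pow 2 y).const_mul 2) hyp2)
    refine h.congr_deriv ?_
    push_cast
    field_simp
    ring
  -- ∂K/∂px
  have k1 : HasDerivAt (fun t : ℝ => KKK a ω μ t py x y) (-(12*a*py*y^3)) px := by
    simp only [KKK]
    have h := (((((hasDerivAt_const px (9*(ω*y^2+py^2+μ/y^2)^2)).add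
        (((hasDerivAt_const px (3*x*py)).sub ((hasDerivAt_id' px).const_mul y)).const_mul
          (12*a*py*y^2))).sub_const (2*a^2*y^4*(6*x^2+y^2))).add_const
        (12*a*x*(μ-ω*y^4))).sub_const (18*ω*μ))
    refine h.congr_deriv ?_
    push_cast
    ring
  -- ∂K/∂x
  have k2 : HasDerivAt (fun t : ℝ => KKK a ω μ px py t y)
      (36*a*py^2*y^2 - 24*a^2*x*y^4 + 12*a*μ - 12*a*ω*y^4) x := by
    simp only [KKK]
    have h := ((((hasDerivAt_const x (9*(ω*y^2+py^2+μ/y^2)^2)).add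
        (((((hasDerivAt_id' x).const_mul 3).mul_const py).sub_const (y*px)).const_mul
          (12*a*py*y^2))).sub
        ((((hasDerivAt_pow 2 x).const_mul 6).add_const (y^2)).const_mul
          (2*a^2*y^4))).add
        (((hasDerivAt_id' x).const_mul (12*a)).mul_const (μ-ω*y^4))).sub_const (18*ω*μ)
    refine h.congr_deriv ?_
    push_cast
    ring
  -- ∂K/∂py
  have k3 : HasDerivAt (fun t : ℝ => KKK a ω μ px t x y)
      (36*py*(ω*y^2+py^2+μ/y^2) + 12*a*y^2*(6*x*py - y*px)) py := by
    simp only [KKK]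
    have h := (((((((hasDerivAt_pow 2 py).const_add (ω*y^2)).add_const
        (μ/y^2)).pow 2).const_mul 9).add
        ((((hasDerivAt_id' py).const_mul (12*a)).mul_const (y^2)).mul
          ((((hasDerivAt_id' py).const_mul (3*x)).sub_const (y*px))))).sub_const
        (2*a^2*y^4*(6*x^2+y^2))).add_const (12*a*x*(μ-ω*y^4)) |>.sub_const (18*ω*μ)
    refine h.congr_deriv ?_
    push_cast
    field_simp
    ring
  -- ∂K/∂y
  have k4 : HasDerivAt (fun t : ℝ => KKK a ω μ px py x t)
      (18*(ω*y^2+py^2+μ/y^2)*(2*ω*y - 2*μ/y^3)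
        + 12*a*py*(2*y)*(3*x*py - y*px) - 12*a*py*y^2*px
        - 2*a^2*(4*y^3*(6*x^2+y^2) + y^4*(2*y)) - 48*a*x*ω*y^3) y := by
    simp only [KKK]
    have hS : HasDerivAt (fun t : ℝ => ω*t^2 + py^2 + μ/t^2)
        (ω*(2*y) + (0*y^2 - μ*(2*y))/(y^2)^2) y := by
      have h := (((hasDerivAt_pow 2 y).const_mul ω).add_const (py^2)).add
        ((hasDerivAt_const y μ).div (hasDerivAt_pow 2 y) hyp)
      convert h using 1
      · rfl
      · rfl
      · rfl
      push_cast; ring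
    have h := (((((hS.pow 2).const_mul 9).add
        (((hasDerivAt_pow 2 y).const_mul (12*a*py)).mul
          ((hasDerivAt_const y (3*x*py)).sub ((hasDerivAt_id' y).mul_const px)))).sub
        (((hasDerivAt_pow 4 y).const_mul (2*a^2)).mul
          ((hasDerivAt_pow 2 y).const_add (6*x^2)))).add
        ((((hasDerivAt_pow 4 y).const_mul ω).const_sub μ).const_mul
          (12*a*x))).sub_const (18*ω*μ)
    refine h.congr_deriv ?_
    push_cast
    simp only [Pi.sub_apply]
    field_simp
    ring
  simp only [pbracket]
  simp only [h1.deriv, h2.deriv, h3.deriv, h4.deriv, k1.deriv, k2.deriv, k3.deriv,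
    k4.deriv]
  field_simp
  ring
end
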